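/- Let c₁, c₂ ∈ (0,1), λ± := (√(c₁(1−c₂)) ± √(c₂(1−c₁)))², and z, s, w ∈ ℂ with z ∉ {0,1}, w² = z, and s² = (z−λ₋)(z−λ₊). With m₂ := (−z + c₁ + c₂ + s)/(2(1−c₂)z(1−z)) − c₂/((1−c₂)z) and m₃ := ((1−2c₁)z + c₁ − c₂ + s)/2, assume 1 + (1−z)m₂ ≠ 0. Then w^{-1} m₃ / (1 + (1−z)m₂) = (w/2)·(−z + (2−c₁−c₂) + s). -/

import Mathlib

theorem stmt8 (c₁ c₂ : ℝ) (hc₁ : c₁ ∈ Set.Ioo (0:ℝ) 1) (hc₂ : c₂ ∈ Set.Ioo (0:ℝ) 1)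
    (lp lm : ℝ)
    (hlp : lp = (Real.sqrt (c₁ * (1 - c₂)) + Real.sqrt (c₂ * (1 - c₁))) ^ 2)
    (hlm : lm = (Real.sqrt (c₁ * (1 - c₂)) - Real.sqrt (c₂ * (1 - c₁))) ^ 2)
    (z s w : ℂ) (hz0 : z ≠ 0) (hz1 : z ≠ 1) (hw : w ^ 2 = z)
    (hs : s ^ 2 = (z - (lm : ℂ)) * (z - (lp : ℂ)))
    (m₂ m₃ : ℂ)
    (hm₂ : m₂ = (-z + c₁ + c₂ + s) / (2 * (1 - (c₂ : ℂ)) * z * (1 - z)) - c₂ / ((1 - (c₂ : ℂ)) * z))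
    (hm₃ : m₃ = ((1 - 2 * (c₁ : ℂ)) * z + c₁ - c₂ + s) / 2)
    (hden : 1 + (1 - z) * m₂ ≠ 0) :
    w⁻¹ * m₃ / (1 + (1 - z) * m₂) = (w / 2) * (-z + (2 - c₁ - c₂) + s) := by
  obtain ⟨hc₁0, hc₁1⟩ := hc₁
  obtain ⟨hc₂0, hc₂1⟩ := hc₂
  have ha : Real.sqrt (c₁ * (1 - c₂)) ^ 2 = c₁ * (1 - c₂) :=
    Real.sq_sqrt (by nlinarith)
  have hb : Real.sqrt (c₂ * (1 - c₁)) ^ 2 = c₂ * (1 - c₁) :=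
    Real.sq_sqrt (by nlinarith)
  have hsum : lm + lp = 2 * (c₁ + c₂ - 2 * c₁ * c₂) := by
    rw [hlm, hlp]; nlinarith [ha, hb]
  have hprod : lm * lp = (c₁ - c₂) ^ 2 := by
    rw [hlm, hlp]; nlinarith [ha, hb]
  have hsumC : ((lm : ℂ) + lp) = 2 * (c₁ + c₂ - 2 * c₁ * c₂) := by
    exact_mod_cast congrArg (Complex.ofReal) hsum
  have hprodC : ((lm : ℂ) * lp) = (c₁ - c₂) ^ 2 := by
    exact_mod_cast congrArg (Complex.ofReal) hprod
  have hs' : s ^ 2 = z ^ 2 - 2 * (c₁ + c₂ - 2 * c₁ * c₂) * z + (c₁ - c₂) ^ 2 := by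
    rw [hs]; linear_combination (-z) * hsumC + hprodC
  have hc2ne : (1 - (c₂ : ℂ)) ≠ 0 := by
    intro h
    have h' : c₂ = 1 := by exact_mod_cast (by linear_combination -h : (c₂:ℂ) = 1)
    linarith
  have hz1' : (1 - z) ≠ 0 := sub_ne_zero.mpr (Ne.symm hz1)
  have hDne : (2 * (1 - (c₂:ℂ)) * z * (1 - z)) ≠ 0 := by
    simp [hc2ne, hz0, hz1']
  have h2 : (2 * (1 - (c₂:ℂ)) * z) ≠ 0 := by simp [hc2ne, hz0]
  have hfrac : (c₂:ℂ) / ((1 - (c₂ : ℂ)) * z) = (2*c₂*(1-z)) / (2 * (1 - (c₂ : ℂ)) * z * (1 - z)) := by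
    rw [div_eq_div_iff (by simp [hc2ne, hz0]) hDne]; ring
  have hm₂' : m₂ = ((-z + c₁ + c₂ + s) - 2*c₂*(1-z)) / (2 * (1 - (c₂ : ℂ)) * z * (1 - z)) := by
    rw [hm₂, hfrac, div_sub_div_same]
  have hE : 1 + (1 - z) * m₂ = (z + c₁ - c₂ + s) / (2 * (1 - (c₂ : ℂ)) * z) := by
    rw [hm₂', eq_comm, div_eq_iff h2]
    have cancel : (1 - z) * (((-z + (c₁:ℂ) + c₂ + s) - 2*c₂*(1-z)) / (2 * (1 - (c₂ : ℂ)) * z * (1 - z))) * (2 * (1 - (c₂:ℂ)) * z) = (-z + c₁ + c₂ + s) - 2*c₂*(1-z) := by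
      rw [show (1 - z) * (((-z + (c₁:ℂ) + c₂ + s) - 2*c₂*(1-z)) / (2 * (1 - (c₂ : ℂ)) * z * (1 - z))) * (2 * (1 - (c₂:ℂ)) * z) = ((-z + (c₁:ℂ) + c₂ + s) - 2*c₂*(1-z)) / (2 * (1 - (c₂ : ℂ)) * z * (1 - z)) * (2 * (1 - (c₂ : ℂ)) * z * (1 - z)) from by ring, div_mul_cancel₀ _ hDne]
    linear_combination -cancel
  have hD : z + (c₁ : ℂ) - c₂ + s ≠ 0 := by
    intro h
    apply hden
    rw [hE, h, zero_div]
  have hwne : w ≠ 0 := by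
    intro h; apply hz0; rw [← hw, h]; ring
  have hwinv : w⁻¹ = w / z := by
    rw [eq_div_iff hz0, ← hw, sq, ← mul_assoc, inv_mul_cancel₀ hwne, one_mul]
  rw [hE, hm₃, hwinv, div_div_eq_mul_div, div_eq_iff hD]
  field_simp
  linear_combination (-1) * hs'
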